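/- For every integer M ≥ 2, ∑_{n=M+1}^{∞} n · |ζ'(n)| ≤ (2M + 4) · |ζ'(M + 1)|, where ζ' is the derivative of the Riemann zeta function, so that |ζ'(x)| = ∑_{k=2}^{∞} (log k)/k^x for x > 1. -/

import Mathlib

/-- The Riemann zeta function for real argument `x > 1`, `ζ(x) = ∑_{n ≥ 1} n^{-x}`. -/
noncomputable def zetaR (x : ℝ) : ℝ := ∑' n : ℕ, ((n : ℝ) + 1) ^ (-x)

/-- The derivative of the (real) Riemann zeta function. -/
noncomputable def zetaDerivR (x : ℝ) : ℝ := deriv zetaR x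

open Real

lemma summable_zetaR {x : ℝ} (hx : 1 < x) :
    Summable (fun n : ℕ => ((n : ℝ) + 1) ^ (-x)) := by
  have h : Summable (fun n : ℕ => (n : ℝ) ^ (-x)) :=
    Real.summable_nat_rpow.2 (by linarith)
  have h2 := (summable_nat_add_iff 1).2 h
  exact h2.congr (by intro n; push_cast; ring_nf)

lemma summable_log_zetaR {x : ℝ} (hx : 1 < x) :
    Summable (fun n : ℕ => Real.log ((n : ℝ) + 1) * ((n : ℝ) + 1) ^ (-x)) := by
  set ε : ℝ := (x - 1) / 2 with hε
  have hε0 : 0 < ε := by rw [hε]; linarith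
  have hx' : 1 < x - ε := by rw [hε]; linarith
  have hs : Summable (fun n : ℕ => (1 / ε) * ((n : ℝ) + 1) ^ (-(x - ε))) :=
    (summable_zetaR hx').mul_left _
  refine hs.of_nonneg_of_le (fun n => ?_) (fun n => ?_)
  · have h1 : (0:ℝ) ≤ Real.log ((n : ℝ) + 1) :=
      Real.log_nonneg (by push_cast; linarith [Nat.cast_nonneg (α := ℝ) n])
    positivity
  · have hpos : (0:ℝ) < (n : ℝ) + 1 := by positivity
    have h1 : Real.log ((n : ℝ) + 1) ≤ ((n : ℝ) + 1) ^ ε / ε :=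
      Real.log_le_rpow_div (le_of_lt hpos) hε0
    have h2 : ((n : ℝ) + 1) ^ ε * ((n : ℝ) + 1) ^ (-x) = ((n : ℝ) + 1) ^ (-(x - ε)) := by
      rw [← Real.rpow_add hpos]; ring_nf
    calc Real.log ((n : ℝ) + 1) * ((n : ℝ) + 1) ^ (-x)
        ≤ (((n : ℝ) + 1) ^ ε / ε) * ((n : ℝ) + 1) ^ (-x) := by
          apply mul_le_mul_of_nonneg_right h1 (Real.rpow_nonneg hpos.le _)
      _ = (1 / ε) * ((n : ℝ) + 1) ^ (-(x - ε)) := by rw [← h2]; ring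

lemma hasDerivAt_zetaR {x : ℝ} (hx : 1 < x) :
    HasDerivAt zetaR (∑' n : ℕ, -(((n : ℝ) + 1) ^ (-x) * Real.log ((n : ℝ) + 1))) x := by
  set a : ℝ := (1 + x) / 2 with ha
  have ha1 : 1 < a := by rw [ha]; linarith
  have hax : a < x := by rw [ha]; linarith
  have key := hasDerivAt_tsum_of_isPreconnected
    (u := fun n : ℕ => Real.log ((n : ℝ) + 1) * ((n : ℝ) + 1) ^ (-a))
    (g := fun (n : ℕ) (y : ℝ) => ((n : ℝ) + 1) ^ (-y))
    (g' := fun (n : ℕ) (y : ℝ) => -(((n : ℝ) + 1) ^ (-y) * Real.log ((n : ℝ) + 1)))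
    (t := Set.Ioi a) (y₀ := x) (y := x)
    (summable_log_zetaR ha1) isOpen_Ioi (isPreconnected_Ioi)
    ?_ ?_ (Set.mem_Ioi.2 hax) (summable_zetaR hx) (Set.mem_Ioi.2 hax)
  · exact key
  · intro n y _
    have hpos : (0:ℝ) < (n : ℝ) + 1 := by positivity
    have h := ((Real.hasStrictDerivAt_const_rpow hpos (-y)).hasDerivAt).comp y
      ((hasDerivAt_id y).neg)
    convert h using 1 <;> first | rfl | ring
  · intro n y hy
    have hpos : (0:ℝ) < (n : ℝ) + 1 := by positivity
    have h1le : (1:ℝ) ≤ (n : ℝ) + 1 := by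
      linarith [Nat.cast_nonneg (α := ℝ) n]
    have hlog : (0:ℝ) ≤ Real.log ((n : ℝ) + 1) := Real.log_nonneg h1le
    have hle : ((n : ℝ) + 1) ^ (-y) ≤ ((n : ℝ) + 1) ^ (-a) :=
      Real.rpow_le_rpow_of_exponent_le h1le (by simp at hy; linarith)
    have : |(-(((n : ℝ) + 1) ^ (-y) * Real.log ((n : ℝ) + 1)))| =
        ((n : ℝ) + 1) ^ (-y) * Real.log ((n : ℝ) + 1) := by
      rw [abs_neg, abs_of_nonneg (mul_nonneg (Real.rpow_nonneg hpos.le _) hlog)]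
    rw [Real.norm_eq_abs, this, mul_comm]
    exact mul_le_mul_of_nonneg_left hle hlog

lemma abs_zetaDerivR {x : ℝ} (hx : 1 < x) :
    |zetaDerivR x| = ∑' n : ℕ, Real.log ((n : ℝ) + 1) * ((n : ℝ) + 1) ^ (-x) := by
  have h := (hasDerivAt_zetaR hx).deriv
  rw [zetaDerivR, h, tsum_neg, abs_neg,
    abs_of_nonneg (tsum_nonneg fun n => mul_nonneg
      (Real.rpow_nonneg (by positivity) _)
      (Real.log_nonneg (le_add_of_nonneg_left (Nat.cast_nonneg n))))]
  exact tsum_congr fun n => by ring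

lemma abs_zetaDerivR_shift (M : ℕ) (hM : 2 ≤ M) (n : ℕ) :
    |zetaDerivR ((n : ℝ) + M + 1)| ≤ (1/2 : ℝ) ^ n * |zetaDerivR ((M : ℝ) + 1)| := by
  have hM1 : (1:ℝ) < (M : ℝ) + 1 := by
    have : (2:ℝ) ≤ (M : ℝ) := by exact_mod_cast hM
    linarith
  have hnM1 : (1:ℝ) < (n : ℝ) + M + 1 := by
    have := Nat.cast_nonneg (α := ℝ) n; linarith
  rw [abs_zetaDerivR hM1, abs_zetaDerivR hnM1, ← tsum_mul_left]
  refine Summable.tsum_le_tsum (fun k => ?_) (summable_log_zetaR hnM1)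
    ((summable_log_zetaR hM1).mul_left _)
  rcases Nat.eq_zero_or_pos k with rfl | hk
  · simp
  · have hk1 : (2:ℝ) ≤ (k : ℝ) + 1 := by
      have : (1:ℝ) ≤ (k : ℝ) := by exact_mod_cast hk
      linarith
    have hkpos : (0:ℝ) < (k : ℝ) + 1 := by linarith
    have hlog : (0:ℝ) ≤ Real.log ((k : ℝ) + 1) := Real.log_nonneg (by linarith)
    have h1 : ((k : ℝ) + 1) ^ (-((n : ℝ) + M + 1)) =
        ((k : ℝ) + 1) ^ (-(n : ℝ)) * ((k : ℝ) + 1) ^ (-((M : ℝ) + 1)) := by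
      rw [← Real.rpow_add hkpos]; ring_nf
    have h2 : ((k : ℝ) + 1) ^ (-(n : ℝ)) ≤ (1/2 : ℝ) ^ n := by
      rw [Real.rpow_neg hkpos.le, Real.rpow_natCast, one_div, inv_pow]
      exact inv_anti₀ (by positivity)
        (pow_le_pow_left₀ (by norm_num) hk1 n)
    calc Real.log ((k : ℝ) + 1) * ((k : ℝ) + 1) ^ (-((n : ℝ) + M + 1))
        = (((k : ℝ) + 1) ^ (-(n : ℝ))) *
            (Real.log ((k : ℝ) + 1) * ((k : ℝ) + 1) ^ (-((M : ℝ) + 1))) := by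
          rw [h1]; ring
      _ ≤ (1/2 : ℝ) ^ n * (Real.log ((k : ℝ) + 1) * ((k : ℝ) + 1) ^ (-((M : ℝ) + 1))) := by
          apply mul_le_mul_of_nonneg_right h2
          exact mul_nonneg hlog (Real.rpow_nonneg hkpos.le _)

/-- For every integer `M ≥ 2`,
`∑_{n > M} n·|ζ'(n)| ≤ (2M+4)·|ζ'(M+1)|` (the series converging). -/
theorem statement14 (M : ℕ) (hM : 2 ≤ M) :
    Summable (fun n : ℕ => ((n : ℝ) + M + 1) * |zetaDerivR ((n : ℝ) + M + 1)|) ∧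
    (∑' n : ℕ, ((n : ℝ) + M + 1) * |zetaDerivR ((n : ℝ) + M + 1)|) ≤
      (2 * (M : ℝ) + 4) * |zetaDerivR ((M : ℝ) + 1)| := by
  set C : ℝ := |zetaDerivR ((M : ℝ) + 1)| with hC
  have hCnn : 0 ≤ C := abs_nonneg _
  have hr : ‖(1/2 : ℝ)‖ < 1 := by rw [Real.norm_eq_abs, abs_of_pos] <;> norm_num
  have hgeo : Summable (fun n : ℕ => (1/2 : ℝ) ^ n) := summable_geometric_of_lt_one (by norm_num) (by norm_num)
  have hngeo : Summable (fun n : ℕ => (n : ℝ) * (1/2 : ℝ) ^ n) := by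
    have := summable_pow_mul_geometric_of_norm_lt_one (R := ℝ) 1 hr
    simpa using this
  have hb : Summable (fun n : ℕ => (((n : ℝ) * (1/2 : ℝ) ^ n) + ((M : ℝ) + 1) * (1/2 : ℝ) ^ n) * C) :=
    ((hngeo.add (hgeo.mul_left _)).mul_right C)
  have hble : ∀ n : ℕ, ((n : ℝ) + M + 1) * |zetaDerivR ((n : ℝ) + M + 1)| ≤
      (((n : ℝ) * (1/2 : ℝ) ^ n) + ((M : ℝ) + 1) * (1/2 : ℝ) ^ n) * C := by
    intro n
    have h1 := abs_zetaDerivR_shift M hM n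
    have hnn : (0:ℝ) ≤ (n : ℝ) + M + 1 := by positivity
    calc ((n : ℝ) + M + 1) * |zetaDerivR ((n : ℝ) + M + 1)|
        ≤ ((n : ℝ) + M + 1) * ((1/2 : ℝ) ^ n * C) := mul_le_mul_of_nonneg_left h1 hnn
      _ = (((n : ℝ) * (1/2 : ℝ) ^ n) + ((M : ℝ) + 1) * (1/2 : ℝ) ^ n) * C := by ring
  have hnn : ∀ n : ℕ, 0 ≤ ((n : ℝ) + M + 1) * |zetaDerivR ((n : ℝ) + M + 1)| := by
    intro n
    exact mul_nonneg (by positivity) (abs_nonneg _)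
  have hsum : Summable (fun n : ℕ => ((n : ℝ) + M + 1) * |zetaDerivR ((n : ℝ) + M + 1)|) :=
    hb.of_nonneg_of_le hnn hble
  refine ⟨hsum, ?_⟩
  have hle := Summable.tsum_le_tsum hble hsum hb
  refine hle.trans (le_of_eq ?_)
  have e1 : ∑' n : ℕ, (((n : ℝ) * (1/2 : ℝ) ^ n) + ((M : ℝ) + 1) * (1/2 : ℝ) ^ n) * C
      = ((∑' n : ℕ, (n : ℝ) * (1/2 : ℝ) ^ n) + ((M : ℝ) + 1) * ∑' n : ℕ, (1/2 : ℝ) ^ n) * C := by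
    rw [tsum_mul_right, Summable.tsum_add hngeo (hgeo.mul_left _), tsum_mul_left]
  rw [e1, tsum_coe_mul_geometric_of_norm_lt_one hr,
    tsum_geometric_of_lt_one (by norm_num) (by norm_num)]
  have e2 : (1/2 : ℝ) / (1 - 1/2) ^ 2 = 2 := by norm_num
  have e3 : ((1:ℝ) - 1/2)⁻¹ = 2 := by norm_num
  rw [e2, e3]; ring
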